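/- Let K be a field, S = K[x_1, …, x_n], and let I_{a,n,d} be the ideal of Veronese type associated to integers n, d ≥ 1 and a vector a = (a_1, …, a_n) with d ≥ a_1 ≥ … ≥ a_n ≥ 1. Then for every integer k ≥ 1, the k-th power of I_{a,n,d} is again an ideal of Veronese type; explicitly, (I_{a,n,d})^k = I_{ka, n, kd}, the ideal generated by all monomials x_1^{b_1}⋯x_n^{b_n} with Σ_i b_i = kd and b_i ≤ k·a_i for all i. -/
import Mathlib


/-- The ideal of Veronese type `I_{a,n,d}`, generated by all monomials
`x_1^{b_1} ⋯ x_n^{b_n}` with `∑ b_i = d` and `b_i ≤ a_i` for all `i`. -/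
noncomputable def veroneseType (K : Type*) [Field K] (n d : ℕ) (a : Fin n → ℕ) :
    Ideal (MvPolynomial (Fin n) K) :=
  Ideal.span {m | ∃ b : Fin n → ℕ, (∑ i, b i) = d ∧ (∀ i, b i ≤ a i) ∧
    m = ∏ i, MvPolynomial.X i ^ b i}

/-- Sandwich lemma: if `l ≤ u` pointwise and `∑ l ≤ d ≤ ∑ u`, then there is
`c` with `l ≤ c ≤ u` pointwise and `∑ c = d`. -/
lemma sandwich_aux : ∀ (m : ℕ) {n : ℕ} (l u : Fin n → ℕ) (d : ℕ),
    d - (∑ i, l i) ≤ m → (∀ i, l i ≤ u i) → (∑ i, l i) ≤ d → d ≤ ∑ i, u i →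
    ∃ c : Fin n → ℕ, (∀ i, l i ≤ c i) ∧ (∀ i, c i ≤ u i) ∧ ∑ i, c i = d := by
  intro m
  induction m with
  | zero =>
    intro n l u d hm hlu hl hu
    exact ⟨l, fun i => le_refl _, hlu, by omega⟩
  | succ m ih =>
    intro n l u d hm hlu hl hu
    by_cases h : ∑ i, l i = d
    · exact ⟨l, fun i => le_rfl, hlu, h⟩
    · have hlt : ∑ i, l i < d := lt_of_le_of_ne hl h
      have hex : ∃ i, l i < u i := by
        by_contra hc
        push_neg at hc
        have : ∑ i, u i ≤ ∑ i, l i := Finset.sum_le_sum (fun i _ => hc i)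
        omega
      obtain ⟨i, hi⟩ := hex
      set l' := Function.update l i (l i + 1) with hl'
      have hsum : ∑ j, l' j = (∑ j, l j) + 1 := by
        rw [hl', Finset.sum_update_of_mem (Finset.mem_univ i)]
        have h2 : ∑ j, l j = ∑ j ∈ Finset.univ \ {i}, l j + l i :=
          (Finset.sum_eq_sum_sdiff_singleton_add (Finset.mem_univ i) l)
        omega
      have hlu' : ∀ j, l' j ≤ u j := by
        intro j
        rcases eq_or_ne j i with rfl | hne
        · simp only [hl', Function.update_self]; omega
        · simpa [hl', Function.update_of_ne hne] using hlu j
      obtain ⟨c, hc1, hc2, hc3⟩ := ih l' u d (by omega) hlu' (by omega) hu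
      refine ⟨c, fun j => ?_, hc2, hc3⟩
      rcases eq_or_ne j i with rfl | hne
      · have := hc1 j
        simp only [hl', Function.update_self] at this
        omega
      · simpa [hl', Function.update_of_ne hne] using hc1 j

/-- Every monomial with exponents summing to `k*d` and bounded by `k*a`
lies in the `k`-th power of the Veronese type ideal. -/
lemma mem_pow_veroneseType (K : Type*) [Field K] (n d : ℕ) (a : Fin n → ℕ) :
    ∀ k, 1 ≤ k → ∀ b : Fin n → ℕ, (∑ i, b i) = k * d → (∀ i, b i ≤ k * a i) →
    (∏ i, MvPolynomial.X i ^ b i : MvPolynomial (Fin n) K) ∈ (veroneseType K n d a) ^ k := by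
  intro k
  induction k with
  | zero => omega
  | succ k ih =>
    intro _ b hsum hle
    rcases Nat.eq_zero_or_pos k with rfl | hk
    · rw [pow_one]
      exact Ideal.subset_span ⟨b, by simpa using hsum, by simpa using hle, rfl⟩
    · -- find c with b i - k * a i ≤ c i ≤ min (b i) (a i), ∑ c = d
      have hlow : ∀ i, (k + 1) * (b i - k * a i) ≤ b i := by
        intro i
        have hb := hle i
        have h1 : b i - k * a i ≤ a i := by
          have : (k + 1) * a i = k * a i + a i := by ring
          omega
        rcases le_or_gt (b i) (k * a i) with h | h
        · simp [Nat.sub_eq_zero_of_le h]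
        · have h2 : k * (b i - k * a i) ≤ k * a i := Nat.mul_le_mul_left _ h1
          have h3 : (k + 1) * (b i - k * a i) = k * (b i - k * a i) + (b i - k * a i) := by
            ring
          omega
      have hup : ∀ i, b i ≤ (k + 1) * min (b i) (a i) := by
        intro i
        rcases le_total (b i) (a i) with h | h
        · rw [min_eq_left h]
          nlinarith
        · rw [min_eq_right h]
          have := hle i
          omega
      have hsl : ∑ i, (b i - k * a i) ≤ d := by
        have h1 : (k + 1) * (∑ i, (b i - k * a i)) ≤ (k + 1) * d := by
          rw [Finset.mul_sum]
          calc ∑ i, (k + 1) * (b i - k * a i) ≤ ∑ i, b i :=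
                Finset.sum_le_sum (fun i _ => hlow i)
            _ = (k + 1) * d := hsum
        exact Nat.le_of_mul_le_mul_left h1 (by omega)
      have hsu : d ≤ ∑ i, min (b i) (a i) := by
        have h1 : (k + 1) * d ≤ (k + 1) * ∑ i, min (b i) (a i) := by
          rw [Finset.mul_sum]
          calc (k + 1) * d = ∑ i, b i := hsum.symm
            _ ≤ ∑ i, (k + 1) * min (b i) (a i) := Finset.sum_le_sum (fun i _ => hup i)
        exact Nat.le_of_mul_le_mul_left h1 (by omega)
      have hlu : ∀ i, b i - k * a i ≤ min (b i) (a i) := by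
        intro i
        have hb := hle i
        have : (k + 1) * a i = k * a i + a i := by ring
        omega
      obtain ⟨c, hc1, hc2, hc3⟩ := sandwich_aux d _ _ d (by omega) hlu hsl hsu
      have hcb : ∀ i, c i ≤ b i := fun i => (hc2 i).trans (min_le_left _ _)
      have hca : ∀ i, c i ≤ a i := fun i => (hc2 i).trans (min_le_right _ _)
      -- the remainder
      set e : Fin n → ℕ := fun i => b i - c i with he
      have hesum : ∑ i, e i = k * d := by
        have : ∑ i, e i = (∑ i, b i) - ∑ i, c i := by
          show ∑ i, (b i - c i) = _
          rw [Finset.sum_tsub_distrib _ (fun i _ => hcb i)]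
        rw [this, hsum, hc3]
        have : (k + 1) * d = k * d + d := by ring
        omega
      have hele : ∀ i, e i ≤ k * a i := by
        intro i
        have := hc1 i
        simp only [he]
        omega
      have hmul : (∏ i, MvPolynomial.X i ^ b i : MvPolynomial (Fin n) K) =
          (∏ i, MvPolynomial.X i ^ e i) * (∏ i, MvPolynomial.X i ^ c i) := by
        rw [← Finset.prod_mul_distrib]
        refine Finset.prod_congr rfl fun i _ => ?_
        rw [← pow_add]
        congr 1
        have := hcb i
        simp only [he]
        omega
      rw [hmul, pow_succ]
      exact Ideal.mul_mem_mul (ih hk e hesum hele)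
        (Ideal.subset_span ⟨c, hc3, hca, rfl⟩)

/-- Powers of ideals of Veronese type are again of Veronese type:
`(I_{a,n,d})^k = I_{ka,n,kd}`. -/
theorem stmt2 (K : Type*) [Field K] (n d : ℕ) (hn : 1 ≤ n) (hd : 1 ≤ d)
    (a : Fin n → ℕ) (ha1 : ∀ i, 1 ≤ a i) (had : ∀ i, a i ≤ d) (hmono : Antitone a)
    (k : ℕ) (hk : 1 ≤ k) :
    (veroneseType K n d a) ^ k = veroneseType K n (k * d) (fun i => k * a i) := by
  apply le_antisymm
  · -- forward inclusion, by induction on k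
    clear hk
    induction k with
    | zero =>
      rw [pow_zero, Ideal.one_eq_top]
      have h1 : (1 : MvPolynomial (Fin n) K) ∈ veroneseType K n (0 * d) (fun i => 0 * a i) :=
        Ideal.subset_span ⟨fun _ => 0, by simp, fun i => by simp, by simp⟩
      have h2 : veroneseType K n (0 * d) (fun i => 0 * a i) = ⊤ :=
        Ideal.eq_top_of_isUnit_mem _ h1 isUnit_one
      rw [h2]
    | succ k ih =>
      rw [pow_succ]
      calc (veroneseType K n d a) ^ k * veroneseType K n d a
          ≤ veroneseType K n (k * d) (fun i => k * a i) * veroneseType K n d a :=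
            Ideal.mul_mono_left ih
        _ ≤ veroneseType K n ((k + 1) * d) (fun i => (k + 1) * a i) := by
            rw [veroneseType, veroneseType, veroneseType, Ideal.span_mul_span']
            apply Ideal.span_mono
            rintro x ⟨p, ⟨b, hb1, hb2, rfl⟩, q, ⟨c, hc1, hc2, rfl⟩, rfl⟩
            refine ⟨fun i => b i + c i, ?_, fun i => ?_, ?_⟩
            · rw [Finset.sum_add_distrib, hb1, hc1]; ring
            · show b i + c i ≤ (k + 1) * a i
              have h1 := hb2 i; have h2 := hc2 i
              have h3 : (k + 1) * a i = k * a i + a i := by ring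
              omega
            · show (∏ i, MvPolynomial.X i ^ b i) * (∏ i, MvPolynomial.X i ^ c i) =
                ∏ i, MvPolynomial.X (R := K) i ^ (b i + c i)
              rw [← Finset.prod_mul_distrib]
              exact Finset.prod_congr rfl fun i _ => (pow_add _ _ _).symm
  · -- reverse inclusion
    rw [veroneseType]
    apply Ideal.span_le.mpr
    rintro x ⟨b, hb1, hb2, rfl⟩
    exact mem_pow_veroneseType K n d a k hk b hb1 hb2
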